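/- Let T be a monad on Type, ρ : T ∘ F ⟹ F ∘ T a natural transformation, (X, χ) a T-algebra carrying a T-automaton structure δ : X → O × (A → X), and g : G → X a set of generators with a chosen right inverse s : X → T G of g^♯. Define γ := (Prod.map id (s ∘ ·)) ∘ δ ∘ g : G → O × (A → T G). Then g^♯ : T G → X is a homomorphism of deterministic automata from (T G, γ^♯) to (X, δ), i.e., δ ∘ g^♯ = (Prod.map id (g^♯ ∘ ·)) ∘ γ^♯. -/

import Mathlib

open CategoryTheory

universe u

def freeExtAut {T : Monad (Type u)} {A O : Type u}
    (ρ : ∀ X : Type u, T.toFunctor.obj (O × (A → X)) → O × (A → T.toFunctor.obj X))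
    {Y : Type u} (h : Y → O × (A → T.toFunctor.obj Y)) :
    T.toFunctor.obj Y → O × (A → T.toFunctor.obj Y) :=
  Prod.map (id : O → O)
      (fun k : A → T.toFunctor.obj (T.toFunctor.obj Y) => T.μ.app Y ∘ k)
    ∘ ρ (T.toFunctor.obj Y) ∘ T.toFunctor.map (TypeCat.ofHom h)

def Faux (A O : Type u) {Y Z : Type u} (f : Y → Z) :
    O × (A → Y) → O × (A → Z) :=
  Prod.map (id : O → O) (fun k : A → Y => f ∘ k)

theorem Faux_comp (A O : Type u) {Y Z W : Type u} (f : Y → Z) (h : Z → W) :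
    Faux A O h ∘ Faux A O f = Faux A O (h ∘ f) := rfl

theorem Faux_id (A O Y : Type u) : Faux A O (id : Y → Y) = id := by
  funext p
  cases p with
  | mk o k => rfl

theorem gsharp_automaton_hom
    (T : Monad (Type u)) (A O : Type u)
    (ρ : ∀ X : Type u, T.toFunctor.obj (O × (A → X)) → O × (A → T.toFunctor.obj X))
    (hρnat : ∀ (X Y : Type u) (f : X → Y),
      ρ Y ∘ T.toFunctor.map (TypeCat.ofHom (Prod.map (id : O → O) (fun k : A → X => f ∘ k)))
        = Prod.map (id : O → O)
            (fun k : A → T.toFunctor.obj X => T.toFunctor.map (TypeCat.ofHom f) ∘ k) ∘ ρ X)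
    (X : Type u) (χ : T.toFunctor.obj X → X)
    (hunit : χ ∘ T.η.app X = id)
    (hassoc : χ ∘ T.μ.app X = χ ∘ T.toFunctor.map (TypeCat.ofHom χ))
    (δ : X → O × (A → X))
    (hδ : δ ∘ χ
      = Prod.map (id : O → O) (fun k : A → T.toFunctor.obj X => χ ∘ k)
          ∘ ρ X ∘ T.toFunctor.map (TypeCat.ofHom δ))
    (G : Type u) (g : G → X) (s : X → T.toFunctor.obj G)
    (hs : (χ ∘ T.toFunctor.map (TypeCat.ofHom g)) ∘ s = id) :
    δ ∘ (χ ∘ T.toFunctor.map (TypeCat.ofHom g))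
      = Prod.map (id : O → O)
            (fun k : A → T.toFunctor.obj G => (χ ∘ T.toFunctor.map (TypeCat.ofHom g)) ∘ k)
          ∘ freeExtAut ρ (Prod.map (id : O → O) (fun k : A → X => s ∘ k) ∘ δ ∘ g) := by
  have Tcomp : ∀ {Y Z W : Type u} (f : Y → Z) (h : Z → W),
      T.toFunctor.map (TypeCat.ofHom (h ∘ f)) = T.toFunctor.map (TypeCat.ofHom h) ∘ T.toFunctor.map (TypeCat.ofHom f) := by
    intro Y Z W f h
    rw [show TypeCat.ofHom (h ∘ f) = TypeCat.ofHom f ≫ TypeCat.ofHom h from rfl, Functor.map_comp]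
    rfl
  have μnat : T.μ.app X ∘ T.toFunctor.map (TypeCat.ofHom (T.toFunctor.map (TypeCat.ofHom g))) = T.toFunctor.map (TypeCat.ofHom g) ∘ T.μ.app G :=
    funext fun x => congrArg (fun f => f x) (T.μ.naturality (TypeCat.ofHom g))
  have key : (χ ∘ T.toFunctor.map (TypeCat.ofHom g)) ∘ T.μ.app G
      = χ ∘ T.toFunctor.map (TypeCat.ofHom (χ ∘ T.toFunctor.map (TypeCat.ofHom g))) := by
    calc (χ ∘ T.toFunctor.map (TypeCat.ofHom g)) ∘ T.μ.app G
        = χ ∘ (T.toFunctor.map (TypeCat.ofHom g) ∘ T.μ.app G) := by funext x; rfl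
      _ = χ ∘ (T.μ.app X ∘ T.toFunctor.map (TypeCat.ofHom (T.toFunctor.map (TypeCat.ofHom g)))) := by rw [μnat]
      _ = (χ ∘ T.μ.app X) ∘ T.toFunctor.map (TypeCat.ofHom (T.toFunctor.map (TypeCat.ofHom g))) := by funext x; rfl
      _ = (χ ∘ T.toFunctor.map (TypeCat.ofHom χ)) ∘ T.toFunctor.map (TypeCat.ofHom (T.toFunctor.map (TypeCat.ofHom g))) := by rw [hassoc]
      _ = χ ∘ T.toFunctor.map (TypeCat.ofHom (χ ∘ T.toFunctor.map (TypeCat.ofHom g))) := by rw [Tcomp (T.toFunctor.map (TypeCat.ofHom g)) χ]; funext x; rfl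
  have hρnat' : ∀ (Y Z : Type u) (f : Y → Z),
      ρ Z ∘ T.toFunctor.map (TypeCat.ofHom (Faux A O f)) = Faux A O (T.toFunctor.map (TypeCat.ofHom f)) ∘ ρ Y :=
    hρnat
  have hδ' : δ ∘ χ = Faux A O χ ∘ ρ X ∘ T.toFunctor.map (TypeCat.ofHom δ) := hδ
  have harm : Faux A O (χ ∘ T.toFunctor.map (TypeCat.ofHom g)) ∘ (Faux A O s ∘ δ ∘ g) = δ ∘ g := by
    funext x
    calc Faux A O (χ ∘ T.toFunctor.map (TypeCat.ofHom g)) (Faux A O s (δ (g x)))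
        = Faux A O ((χ ∘ T.toFunctor.map (TypeCat.ofHom g)) ∘ s) (δ (g x)) := rfl
      _ = Faux A O id (δ (g x)) := by rw [hs]
      _ = δ (g x) := by rw [Faux_id]; rfl
  calc δ ∘ (χ ∘ T.toFunctor.map (TypeCat.ofHom g))
      = (δ ∘ χ) ∘ T.toFunctor.map (TypeCat.ofHom g) := by funext x; rfl
    _ = (Faux A O χ ∘ ρ X ∘ T.toFunctor.map (TypeCat.ofHom δ)) ∘ T.toFunctor.map (TypeCat.ofHom g) := by rw [hδ']
    _ = Faux A O χ ∘ ρ X ∘ T.toFunctor.map (TypeCat.ofHom (δ ∘ g)) := by rw [Tcomp g δ]; funext x; rfl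
    _ = Faux A O χ ∘ ρ X ∘ T.toFunctor.map
          (TypeCat.ofHom (Faux A O (χ ∘ T.toFunctor.map (TypeCat.ofHom g)) ∘ (Faux A O s ∘ δ ∘ g))) := by rw [harm]
    _ = Faux A O χ ∘ ρ X ∘ (T.toFunctor.map (TypeCat.ofHom (Faux A O (χ ∘ T.toFunctor.map (TypeCat.ofHom g))))
          ∘ T.toFunctor.map (TypeCat.ofHom (Faux A O s ∘ δ ∘ g))) := by rw [Tcomp (Faux A O s ∘ δ ∘ g) (Faux A O (χ ∘ T.toFunctor.map (TypeCat.ofHom g)))]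
    _ = Faux A O χ ∘ (ρ X ∘ T.toFunctor.map (TypeCat.ofHom (Faux A O (χ ∘ T.toFunctor.map (TypeCat.ofHom g)))))
          ∘ T.toFunctor.map (TypeCat.ofHom (Faux A O s ∘ δ ∘ g)) := by funext x; rfl
    _ = Faux A O χ ∘ (Faux A O (T.toFunctor.map (TypeCat.ofHom (χ ∘ T.toFunctor.map (TypeCat.ofHom g)))) ∘ ρ (T.toFunctor.obj G))
          ∘ T.toFunctor.map (TypeCat.ofHom (Faux A O s ∘ δ ∘ g)) := by
        rw [hρnat' (T.toFunctor.obj G) X (χ ∘ T.toFunctor.map (TypeCat.ofHom g))]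
    _ = Faux A O (χ ∘ T.toFunctor.map (TypeCat.ofHom (χ ∘ T.toFunctor.map (TypeCat.ofHom g)))) ∘ ρ (T.toFunctor.obj G)
          ∘ T.toFunctor.map (TypeCat.ofHom (Faux A O s ∘ δ ∘ g)) := by funext x; rfl
    _ = Faux A O ((χ ∘ T.toFunctor.map (TypeCat.ofHom g)) ∘ T.μ.app G) ∘ ρ (T.toFunctor.obj G)
          ∘ T.toFunctor.map (TypeCat.ofHom (Faux A O s ∘ δ ∘ g)) := by rw [key]
    _ = Prod.map (id : O → O)
            (fun k : A → T.toFunctor.obj G => (χ ∘ T.toFunctor.map (TypeCat.ofHom g)) ∘ k)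
          ∘ freeExtAut ρ (Prod.map (id : O → O) (fun k : A → X => s ∘ k) ∘ δ ∘ g) := by
        funext x; rfl
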